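/- Let ℓ_01 be the 0-1 loss, ℓ_01(v, i) = 1 − v_i. A tuple (φ_i)_{i∈Y} of real-valued functions satisfies, for every A ⊆ Y and every x_A ∈ spt(μ_A), sup_{m_A ∈ Δ_A} { Σ_{i∈A} m_i φ_i(x_i) + ℓ_A(m_A) − c_A(x_A, m_A) } ≤ 0 (with ℓ_A(m_A) = 1 − max_{i∈A} m_i) if and only if Σ_{i∈A} φ_i(x_i) ≤ 1 − |A| + c_A(x_A) for every A ⊆ Y and every x_A ∈ spt(μ_A), where c_A(x_A) := inf_{x̃∈X} Σ_{i∈A} c(x_i, x̃). Consequently, the dual problem of Theorem 1.4 for ℓ_01 is equivalent via the change of variables g_i = 1 + φ_i to the problem: sup over (g_i) of Σ_i ∫ g_i dμ_i subject to Σ_{i∈A} g_i(x_i) ≤ 1 + c_A(x_A) for all A ⊆ Y and x_A ∈ spt(μ_A); in particular the value of the former is 1 minus the value of the latter, and (φ_i) solves the former if and only if (g_i = 1 + φ_i) solves the latter. -/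

import Mathlib

open MeasureTheory Set Filter Topology Bornology
open scoped ENNReal BigOperators NNReal

noncomputable section

namespace AdvRobust

variable {X : Type*} {Y : Type*}

/-- The (topological) support of a Borel measure: points all of whose open
neighborhoods have positive measure. -/
def msupport [TopologicalSpace X] [MeasurableSpace X] (μ : Measure X) : Set X :=
  {x | ∀ U : Set X, IsOpen U → x ∈ U → 0 < μ U}

/-- Compactness/coercivity condition on a cost function. -/
def Coercive [MetricSpace X] (c : X → X → ℝ≥0∞) : Prop :=
  ∀ x x' : ℕ → X, IsBounded (Set.range x') →
    (∃ M : ℝ≥0∞, M ≠ ⊤ ∧ ∀ n, c (x n) (x' n) ≤ M) →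
    IsCompact (closure (Set.range fun n => (x n, x' n)))

/-- Assumption 1.2 on the cost function. -/
structure CostAssumption [MetricSpace X] (c : X → X → ℝ≥0∞) : Prop where
  lsc : LowerSemicontinuous (Function.uncurry c)
  diag : ∀ x, c x x = 0
  coer : Coercive c ∨ ∃ (B : ℝ≥0∞) (c₀ : X → X → ℝ≥0∞),
      0 < B ∧ B ≠ ⊤ ∧ Coercive c₀ ∧ ∀ x y, c x y = min (c₀ x y) B

/-- Assumption 1.1 on the loss function: convexity on the simplex, and
finiteness at some common point of the simplex. -/
structure LossAssumption [Fintype Y] (ℓ : (Y → ℝ) → Y → ℝ≥0∞) : Prop where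
  convex : ∀ i : Y, ∀ v ∈ stdSimplex ℝ Y, ∀ w ∈ stdSimplex ℝ Y, ∀ a b : ℝ,
      0 ≤ a → 0 ≤ b → a + b = 1 →
      ℓ (a • v + b • w) i ≤ ENNReal.ofReal a * ℓ v i + ENNReal.ofReal b * ℓ w i
  finite : ∃ v₀ ∈ stdSimplex ℝ Y, ∀ i : Y, ℓ v₀ i ≠ ⊤

/-- Optimal transport cost between two positive measures (`+∞` if there is
no coupling). -/
def OTCost [MeasurableSpace X] (c : X → X → ℝ≥0∞) (μ ν : Measure X) : ℝ≥0∞ :=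
  ⨅ (π : Measure (X × X)) (_ : π.map Prod.fst = μ) (_ : π.map Prod.snd = ν),
    ∫⁻ p, c p.1 p.2 ∂π

/-- The adversarial objective for a fixed classifier `f`. -/
def advObj [MeasurableSpace X] [Fintype Y]
    (c : X → X → ℝ≥0∞) (ℓ : (Y → ℝ) → Y → ℝ≥0∞) (μ : Y → Measure X)
    (f : X → Y → ℝ) : EReal :=
  ⨆ (μ' : Y → Measure X) (_ : ∀ i, IsFiniteMeasure (μ' i)),
    ((∑ i, ∫⁻ x, ℓ (f x) i ∂(μ' i) : ℝ≥0∞) : EReal)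
      - ((∑ i, OTCost c (μ i) (μ' i) : ℝ≥0∞) : EReal)

/-- The adversarial (learner-agnostic) value `V`. -/
def advValue [MeasurableSpace X] [Fintype Y]
    (c : X → X → ℝ≥0∞) (ℓ : (Y → ℝ) → Y → ℝ≥0∞) (μ : Y → Measure X) : EReal :=
  ⨅ (f : X → Y → ℝ) (_ : Measurable f) (_ : ∀ x, f x ∈ stdSimplex ℝ Y),
    advObj c ℓ μ f

/-- `c`-transform of `φ` relative to the set `S`. -/
def cTransform (c : X → X → ℝ≥0∞) (S : Set X) (φ : X → ℝ) (x' : X) : EReal :=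
  ⨅ x ∈ S, ((c x x' : EReal) - (φ x : EReal))

/-- The probability simplex over a subset `A` of labels. -/
def simplexOn [Fintype Y] (A : Finset Y) : Set (Y → ℝ) :=
  {m | (∀ i, 0 ≤ m i) ∧ (∀ i ∉ A, m i = 0) ∧ ∑ i ∈ A, m i = 1}

/-- `ℓ_A(m_A) = inf_{v ∈ Δ_Y} ∑_{i ∈ A} ℓ(v,i) m_i`. -/
def lossOn [Fintype Y] (ℓ : (Y → ℝ) → Y → ℝ≥0∞) (A : Finset Y) (m : Y → ℝ) : ℝ≥0∞ :=
  ⨅ v ∈ stdSimplex ℝ Y, ∑ i ∈ A, ENNReal.ofReal (m i) * ℓ v i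

/-- `c_A(x_A, m_A) = inf_{x̃ ∈ X} ∑_{i ∈ A} m_i c(x_i, x̃)`. -/
def costOn (c : X → X → ℝ≥0∞) (A : Finset Y) (x : Y → X) (m : Y → ℝ) : ℝ≥0∞ :=
  ⨅ x' : X, ∑ i ∈ A, ENNReal.ofReal (m i) * c (x i) x'

/-- Feasibility constraint of the dual problem (1.12). -/
def dualConstraint [TopologicalSpace X] [MeasurableSpace X] [Fintype Y]
    (c : X → X → ℝ≥0∞) (ℓ : (Y → ℝ) → Y → ℝ≥0∞) (μ : Y → Measure X)
    (φ : Y → X → ℝ) : Prop :=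
  ∀ (A : Finset Y) (x : Y → X), (∀ i ∈ A, x i ∈ msupport (μ i)) →
    (⨆ m ∈ simplexOn A,
      (((∑ i ∈ A, m i * φ i (x i) : ℝ) : EReal)
        + (lossOn ℓ A m : EReal) - (costOn c A x m : EReal))) ≤ 0

/-- Value of the dual problem (1.12) over tuples of bounded continuous functions. -/
def dualValueCb [MetricSpace X] [MeasurableSpace X] [Fintype Y]
    (c : X → X → ℝ≥0∞) (ℓ : (Y → ℝ) → Y → ℝ≥0∞) (μ : Y → Measure X) : EReal :=
  ⨅ (φ : Y → BoundedContinuousFunction X ℝ)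
    (_ : dualConstraint c ℓ μ (fun i => (φ i : X → ℝ))),
    (((- ∑ i, ∫ x, φ i x ∂(μ i)) : ℝ) : EReal)

/-- Value of the dual problem (1.12) over tuples from a family `G` of functions. -/
def dualValueG [TopologicalSpace X] [MeasurableSpace X] [Fintype Y]
    (c : X → X → ℝ≥0∞) (ℓ : (Y → ℝ) → Y → ℝ≥0∞) (μ : Y → Measure X)
    (G : Set (X → ℝ)) : EReal :=
  ⨅ (φ : Y → X → ℝ) (_ : ∀ i, φ i ∈ G) (_ : dualConstraint c ℓ μ φ),
    (((- ∑ i, ∫ x, φ i x ∂(μ i)) : ℝ) : EReal)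

/-- The nonnegative part of an extended real, as an extended nonnegative real. -/
def epos (e : EReal) : ℝ≥0∞ := if e = ⊤ then ⊤ else ENNReal.ofReal e.toReal

/-- Extended integral of an extended-real-valued function. -/
def eintegral [MeasurableSpace X] (μ : Measure X) (g : X → EReal) : EReal :=
  ((∫⁻ x, epos (g x) ∂μ : ℝ≥0∞) : EReal) - ((∫⁻ x, epos (-(g x)) ∂μ : ℝ≥0∞) : EReal)


/-- The 0-1 loss `ℓ_01(v,i) = 1 − v_i` (as a `[0,∞]`-valued loss). -/
def loss01 {Y : Type*} [Fintype Y] : (Y → ℝ) → Y → ℝ≥0∞ :=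
  fun v i => ENNReal.ofReal (1 - v i)

/-- `c_A(x_A) = inf_{x̃} ∑_{i ∈ A} c(x_i, x̃)`. -/
def costAinf {X Y : Type*} (c : X → X → ℝ≥0∞) (A : Finset Y) (x : Y → X) : ℝ≥0∞ :=
  ⨅ x' : X, ∑ i ∈ A, c (x i) x'

private lemma core {Y : Type*} (p r : Y → ℝ) :
    ∀ (n : ℕ) (A : Finset Y) (m : Y → ℝ) (K : ℝ), A.card ≤ n →
    (∀ i ∈ A, 0 ≤ m i) →
    (∀ B ⊆ A, (∀ i ∈ B, 0 < m i) → ∑ i ∈ B, p i ≤ 1 - B.card + ∑ i ∈ B, r i) →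
    0 ≤ K → (∀ i ∈ A, m i ≤ K) →
    ∑ i ∈ A, m i * p i + ∑ i ∈ A, m i ≤ K + ∑ i ∈ A, m i * r i := by
  classical
  intro n
  induction n with
  | zero =>
    intro A m K hcard _ _ hK _
    have : A = ∅ := Finset.card_eq_zero.mp (Nat.le_zero.mp hcard)
    subst this; simpa using hK
  | succ n ih =>
    intro A m K hcard hm hH hK hmK
    rcases A.eq_empty_or_nonempty with rfl | hA
    · simpa using hK
    · set t := A.inf' hA m with ht_def
      have ht0 : 0 ≤ t := Finset.le_inf' hA m hm
      obtain ⟨i₀, hi₀, hti₀⟩ := A.exists_mem_eq_inf' hA m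
      have htK : t ≤ K := by rw [ht_def, hti₀]; exact hmK i₀ hi₀
      have htle : ∀ i ∈ A, t ≤ m i := fun i hi => Finset.inf'_le m hi
      set A' := A.filter (fun i => t < m i) with hA'_def
      have hA'sub : A' ⊆ A := Finset.filter_subset _ _
      have hi₀notin : i₀ ∉ A' := by
        simp [hA'_def, hti₀.symm.le, Finset.mem_filter, hi₀, not_lt]
        exact hti₀.symm.le.trans (le_of_eq ht_def.symm)
      have hcard' : A'.card ≤ n := by
        have : A'.card < A.card := Finset.card_lt_card ⟨hA'sub, fun h => hi₀notin (h hi₀)⟩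
        omega
      have key : ∀ f : Y → ℝ,
          ∑ i ∈ A, m i * f i = t * ∑ i ∈ A, f i + ∑ i ∈ A', (m i - t) * f i := by
        intro f
        have h1 : ∑ i ∈ A, (m i - t) * f i = ∑ i ∈ A', (m i - t) * f i := by
          refine (Finset.sum_subset hA'sub ?_).symm
          intro i hi hni
          have : ¬ t < m i := by simpa [hA'_def, hi] using hni
          have : m i = t := le_antisymm (not_lt.mp this) (htle i hi)
          simp [this]
        calc ∑ i ∈ A, m i * f i = ∑ i ∈ A, (t * f i + (m i - t) * f i) := by
              apply Finset.sum_congr rfl; intro i _; ring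
          _ = t * ∑ i ∈ A, f i + ∑ i ∈ A', (m i - t) * f i := by
              rw [Finset.sum_add_distrib, Finset.mul_sum, h1]
      have key1 : ∑ i ∈ A, m i = t * A.card + ∑ i ∈ A', (m i - t) := by
        have := key (fun _ => 1); simpa using this
      have E1 := key p
      have E2 := key r
      have I1 : t * ∑ i ∈ A, p i ≤ t * (1 - A.card + ∑ i ∈ A, r i) := by
        rcases eq_or_lt_of_le ht0 with h0 | h0
        · rw [← h0]; simp
        · have hP := hH A (subset_refl A) (fun i hi => lt_of_lt_of_le h0 (htle i hi))
          exact mul_le_mul_of_nonneg_left hP ht0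
      have I2 := ih A' (fun i => m i - t) (K - t) hcard'
        (fun i hi => by
          have h := (Finset.mem_filter.mp hi).2; linarith)
        (fun B hB hBpos => hH B (hB.trans hA'sub)
          (fun i hi => by have h2 := hBpos i hi; linarith))
        (by linarith)
        (fun i hi => by have h := hmK i (hA'sub hi); linarith)
      have hcardA : (0:ℝ) ≤ A.card := Nat.cast_nonneg _
      nlinarith [I1, I2, E1, E2, key1]

private lemma coe_ennreal_eq (x : ℝ≥0∞) (hx : x ≠ ⊤) :
    (x : EReal) = ((x.toReal : ℝ) : EReal) := by
  conv_lhs => rw [← ENNReal.ofReal_toReal hx]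
  rw [EReal.coe_ennreal_ofReal, max_eq_left ENNReal.toReal_nonneg]

private lemma part1 {X Y : Type*} [MetricSpace X] [MeasurableSpace X] [Nonempty X]
    [Fintype Y] (c : X → X → ℝ≥0∞) (μ : Y → Measure X) (φ : Y → X → ℝ) :
    dualConstraint c loss01 μ φ ↔
      ∀ (A : Finset Y) (x : Y → X), (∀ i ∈ A, x i ∈ msupport (μ i)) →
        ((∑ i ∈ A, φ i (x i) : ℝ) : EReal)
          ≤ ((1 - (A.card : ℝ) : ℝ) : EReal) + (costAinf c A x : EReal) := by
  classical
  constructor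
  · -- dualConstraint → linear
    intro h A x hx
    rcases A.eq_empty_or_nonempty with rfl | hA
    · simp only [Finset.sum_empty, Finset.card_empty, Nat.cast_zero, sub_zero]
      have h0 : (0 : EReal) ≤ (costAinf c ∅ x : EReal) := by
        exact EReal.coe_ennreal_nonneg _
      calc ((0:ℝ) : EReal) ≤ ((1:ℝ) : EReal) := by
            exact_mod_cast (by norm_num : (0:ℝ) ≤ 1)
        _ = ((1:ℝ) : EReal) + 0 := (add_zero _).symm
        _ ≤ ((1:ℝ) : EReal) + (costAinf c ∅ x : EReal) := add_le_add le_rfl h0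
    · set k : ℝ := (A.card : ℝ) with hk_def
      have hk0 : (0:ℝ) < k := by
        simp only [hk_def, Nat.cast_pos]; exact Finset.card_pos.mpr hA
      by_cases hCA : costAinf c A x = ⊤
      · rw [hCA]
        rw [show ((⊤ : ℝ≥0∞) : EReal) = (⊤ : EReal) from rfl]
        rw [EReal.add_top_of_ne_bot (EReal.coe_ne_bot _)]
        exact le_top
      · set m : Y → ℝ := fun i => if i ∈ A then k⁻¹ else 0 with hm_def
        have hmA : ∀ i ∈ A, m i = k⁻¹ := fun i hi => by simp [hm_def, hi]
        have hminv : m ∈ simplexOn A := by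
          refine ⟨fun i => ?_, fun i hi => by simp [hm_def, hi], ?_⟩
          · by_cases hi : i ∈ A <;> simp [hm_def, hi, inv_nonneg.mpr hk0.le]
          · rw [Finset.sum_congr rfl hmA, Finset.sum_const, nsmul_eq_mul]
            field_simp [hk_def]
            exact hk_def.symm
        have hterm := le_trans (le_iSup₂ (f := fun m (_ : m ∈ simplexOn A) =>
            (((∑ i ∈ A, m i * φ i (x i) : ℝ) : EReal)
              + (lossOn loss01 A m : EReal) - (costOn c A x m : EReal))) m hminv)
          (h A x hx)
        have ha : ∑ i ∈ A, m i * φ i (x i) = k⁻¹ * ∑ i ∈ A, φ i (x i) := by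
          rw [Finset.mul_sum]
          exact Finset.sum_congr rfl (fun i hi => by rw [hmA i hi])
        -- lower bound on lossOn
        have hL : ENNReal.ofReal (1 - k⁻¹) ≤ lossOn loss01 A m := by
          apply le_iInf₂
          intro v hv
          obtain ⟨hv1, hv2⟩ := hv
          have hv3 : ∀ i, v i ≤ 1 := by
            intro i
            calc v i ≤ ∑ j, v j := Finset.single_le_sum (fun j _ => hv1 j) (Finset.mem_univ i)
              _ = 1 := hv2
          have hAv : ∑ i ∈ A, v i ≤ 1 := by
            rw [← hv2]
            exact Finset.sum_le_sum_of_subset_of_nonneg (Finset.subset_univ A)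
              (fun j _ _ => hv1 j)
          have hsum : ∑ i ∈ A, ENNReal.ofReal (m i) * loss01 v i
              = ENNReal.ofReal (∑ i ∈ A, k⁻¹ * (1 - v i)) := by
            rw [ENNReal.ofReal_sum_of_nonneg
              (fun i _ => mul_nonneg (inv_nonneg.mpr hk0.le) (by linarith [hv3 i]))]
            refine Finset.sum_congr rfl (fun i hi => ?_)
            rw [hmA i hi, loss01, ENNReal.ofReal_mul (inv_nonneg.mpr hk0.le)]
          rw [hsum]
          apply ENNReal.ofReal_le_ofReal
          have hexp : ∑ i ∈ A, k⁻¹ * (1 - v i) = k * k⁻¹ - k⁻¹ * ∑ i ∈ A, v i := by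
            simp only [mul_sub, mul_one, Finset.sum_sub_distrib, Finset.sum_const,
              nsmul_eq_mul, ← Finset.mul_sum]
            rw [← hk_def]
          have hkk : k * k⁻¹ = 1 := mul_inv_cancel₀ hk0.ne'
          have hmono : k⁻¹ * ∑ i ∈ A, v i ≤ k⁻¹ * 1 :=
            mul_le_mul_of_nonneg_left hAv (inv_nonneg.mpr hk0.le)
          rw [hexp]
          linarith
        -- costOn computation
        have hC : costOn c A x m = ENNReal.ofReal k⁻¹ * costAinf c A x := by
          rw [costOn, costAinf, ENNReal.mul_iInf_of_ne
            (ENNReal.ofReal_pos.mpr (inv_pos.mpr hk0)).ne' ENNReal.ofReal_ne_top]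
          refine iInf_congr (fun x' => ?_)
          rw [Finset.mul_sum]
          exact Finset.sum_congr rfl (fun i hi => by rw [hmA i hi])
        -- combine everything
        set S := ∑ i ∈ A, φ i (x i) with hS_def
        set ca := (costAinf c A x).toReal with hca_def
        have hCA' : costAinf c A x = ENNReal.ofReal ca := (ENNReal.ofReal_toReal hCA).symm
        have hca0 : 0 ≤ ca := ENNReal.toReal_nonneg
        rw [ha, hC, hCA'] at hterm
        have e1 : ((ENNReal.ofReal k⁻¹ * ENNReal.ofReal ca : ℝ≥0∞) : EReal)
            = ((k⁻¹ * ca : ℝ) : EReal) := by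
          rw [← ENNReal.ofReal_mul (inv_nonneg.mpr hk0.le), EReal.coe_ennreal_ofReal,
            max_eq_left (mul_nonneg (inv_nonneg.mpr hk0.le) hca0)]
        rw [e1] at hterm
        have hterm3 : ((k⁻¹ * S : ℝ) : EReal) + ((1 - k⁻¹ : ℝ) : EReal)
            - ((k⁻¹ * ca : ℝ) : EReal) ≤ 0 := by
          refine le_trans ?_ hterm
          rw [sub_eq_add_neg, sub_eq_add_neg]
          refine add_le_add (add_le_add le_rfl ?_) le_rfl
          calc ((1 - k⁻¹:ℝ):EReal) ≤ ((ENNReal.ofReal (1 - k⁻¹) : ℝ≥0∞) : EReal) := by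
                rw [EReal.coe_ennreal_ofReal]
                exact EReal.coe_le_coe_iff.mpr (le_max_left _ _)
            _ ≤ _ := by exact_mod_cast hL
        have hreal : k⁻¹ * S + (1 - k⁻¹) - k⁻¹ * ca ≤ 0 := by
          rw [← EReal.coe_add, ← EReal.coe_sub] at hterm3
          exact_mod_cast hterm3
        have hk1 : k * k⁻¹ = 1 := mul_inv_cancel₀ hk0.ne'
        have h2 : k * (k⁻¹ * S) = S := by field_simp
        have h3 : k * (k⁻¹ * ca) = ca := by field_simp
        have hmul := mul_le_mul_of_nonneg_left hreal hk0.le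
        have hfin : S ≤ 1 - k + ca := by nlinarith [hmul, hk1, h2, h3]
        rw [hCA', EReal.coe_ennreal_ofReal, max_eq_left hca0, ← EReal.coe_add]
        exact_mod_cast hfin
  · intro h A x hx
    apply iSup₂_le
    intro m hm
    obtain ⟨hm1, hm2, hm3⟩ := hm
    have hA : A.Nonempty := by
      rcases A.eq_empty_or_nonempty with rfl | hA
      · simp at hm3
      · exact hA
    obtain ⟨j, hjA, hjmax⟩ := Finset.exists_max_image A m hA
    have hmj0 : 0 ≤ m j := hm1 j
    have hmj1 : m j ≤ 1 := by
      rw [← hm3]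
      exact Finset.single_le_sum (fun i _ => hm1 i) hjA
    set a : ℝ := ∑ i ∈ A, m i * φ i (x i) with ha_def
    -- lossOn upper bound
    have hL : lossOn loss01 A m ≤ ENNReal.ofReal (1 - m j) := by
      set v : Y → ℝ := fun i => if i = j then 1 else 0 with hv_def
      have hv : v ∈ stdSimplex ℝ Y := by
        constructor
        · intro i; by_cases hij : i = j <;> simp [hv_def, hij]
        · simp [hv_def, Finset.sum_ite_eq']
      refine le_trans (iInf₂_le v hv) (le_of_eq ?_)
      have e : ∑ i ∈ A, ENNReal.ofReal (m i) * loss01 v i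
          = ENNReal.ofReal (∑ i ∈ A, m i * (1 - v i)) := by
        rw [ENNReal.ofReal_sum_of_nonneg (fun i _ => mul_nonneg (hm1 i)
          (by by_cases hij : i = j <;> simp [hv_def, hij]))]
        exact Finset.sum_congr rfl (fun i hi => by
          rw [loss01, ENNReal.ofReal_mul (hm1 i)])
      rw [e]
      congr 1
      have e2 : ∑ i ∈ A, m i * (1 - v i) = (∑ i ∈ A, m i) - ∑ i ∈ A, m i * v i := by
        rw [← Finset.sum_sub_distrib]
        exact Finset.sum_congr rfl fun i _ => by ring
      have e3 : ∑ i ∈ A, m i * v i = m j := by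
        simp only [hv_def, mul_ite, mul_one, mul_zero]
        rw [Finset.sum_ite_eq' A j m]
        simp [hjA]
      rw [e2, e3, hm3]
    -- key bound on costOn
    have hC : ENNReal.ofReal (a + (1 - m j)) ≤ costOn c A x m := by
      apply le_iInf
      intro x'
      by_cases hbad : ∃ i ∈ A, m i ≠ 0 ∧ c (x i) x' = ⊤
      · obtain ⟨i, hiA, hmi, hci⟩ := hbad
        have htop : ∑ i ∈ A, ENNReal.ofReal (m i) * c (x i) x' = ⊤ := by
          rw [ENNReal.sum_eq_top]
          refine ⟨i, hiA, ?_⟩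
          rw [hci, ENNReal.mul_top
            (ENNReal.ofReal_pos.mpr (lt_of_le_of_ne (hm1 i) (Ne.symm hmi))).ne']
        rw [htop]; exact le_top
      · push_neg at hbad
        set r : Y → ℝ := fun i => (c (x i) x').toReal with hr_def
        have hsum : ∑ i ∈ A, ENNReal.ofReal (m i) * c (x i) x'
            = ENNReal.ofReal (∑ i ∈ A, m i * r i) := by
          rw [ENNReal.ofReal_sum_of_nonneg
            (fun i _ => mul_nonneg (hm1 i) ENNReal.toReal_nonneg)]
          refine Finset.sum_congr rfl (fun i hi => ?_)
          by_cases hmi : m i = 0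
          · simp [hmi]
          · rw [ENNReal.ofReal_mul (hm1 i)]
            congr 1
            exact (ENNReal.ofReal_toReal (hbad i hi hmi)).symm
        rw [hsum]
        apply ENNReal.ofReal_le_ofReal
        have hcore := core (fun i => φ i (x i)) r A.card A m (m j) le_rfl
          (fun i _ => hm1 i)
          (fun B hB hBpos => by
            have hlin := h B x (fun i hi => hx i (hB hi))
            have hcB : (costAinf c B x : EReal) ≤ ((∑ i ∈ B, r i : ℝ) : EReal) := by
              have h1 : costAinf c B x ≤ ∑ i ∈ B, c (x i) x' := iInf_le _ x'
              have h2 : ∑ i ∈ B, c (x i) x' = ENNReal.ofReal (∑ i ∈ B, r i) := by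
                rw [ENNReal.ofReal_sum_of_nonneg (fun i _ => ENNReal.toReal_nonneg)]
                refine Finset.sum_congr rfl fun i hi => ?_
                exact (ENNReal.ofReal_toReal (hbad i (hB hi) (hBpos i hi).ne')).symm
              rw [h2] at h1
              calc (costAinf c B x : EReal)
                  ≤ ((ENNReal.ofReal (∑ i ∈ B, r i) : ℝ≥0∞) : EReal) := by
                    exact_mod_cast h1
                _ = ((∑ i ∈ B, r i : ℝ) : EReal) := by
                    rw [EReal.coe_ennreal_ofReal,
                      max_eq_left (Finset.sum_nonneg fun i _ => ENNReal.toReal_nonneg)]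
            have hcomb := le_trans hlin (add_le_add le_rfl hcB)
            rw [← EReal.coe_add] at hcomb
            exact_mod_cast hcomb)
          hmj0 (fun i hi => hjmax i hi)
        rw [hm3] at hcore
        linarith
    -- combine
    have hstep1 : ((a : ℝ) : EReal) + (lossOn loss01 A m : EReal) - (costOn c A x m : EReal)
        ≤ ((a : ℝ) : EReal) + ((ENNReal.ofReal (1 - m j) : ℝ≥0∞) : EReal)
          - (costOn c A x m : EReal) := by
      rw [sub_eq_add_neg, sub_eq_add_neg]
      exact add_le_add (add_le_add le_rfl (by exact_mod_cast hL)) le_rfl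
    refine le_trans hstep1 ?_
    rw [EReal.sub_le_iff_le_add (Or.inl (EReal.coe_ennreal_ne_bot _))
      (Or.inr (by simp))]
    rw [zero_add]
    have e4 : ((a : ℝ) : EReal) + ((ENNReal.ofReal (1 - m j) : ℝ≥0∞) : EReal)
        = ((a + (1 - m j) : ℝ) : EReal) := by
      rw [EReal.coe_ennreal_ofReal, max_eq_left (by linarith), ← EReal.coe_add]
    rw [e4]
    calc ((a + (1 - m j) : ℝ) : EReal)
        ≤ ((ENNReal.ofReal (a + (1 - m j)) : ℝ≥0∞) : EReal) := by
          rw [EReal.coe_ennreal_ofReal]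
          exact EReal.coe_le_coe_iff.mpr (le_max_left _ _)
      _ ≤ (costOn c A x m : EReal) := by exact_mod_cast hC


private lemma esub_invol (r : ℝ) (x : EReal) : (r:EReal) - ((r:EReal) - x) = x := by
  induction x using EReal.rec with
  | bot => rw [EReal.sub_bot (EReal.coe_ne_bot r), EReal.sub_top]
  | coe y => rw [← EReal.coe_sub, ← EReal.coe_sub]; norm_num
  | top => rw [EReal.sub_top, EReal.sub_bot (EReal.coe_ne_bot r)]

private lemma esub_anti (r : ℝ) {x y : EReal} (h : x ≤ y) : (r:EReal) - y ≤ (r:EReal) - x := by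
  rw [sub_eq_add_neg, sub_eq_add_neg]
  exact add_le_add le_rfl (EReal.neg_le_neg_iff.mpr h)

private lemma iInf_const_sub {ι : Sort*} (r : ℝ) (a : ι → ℝ) :
    ⨅ i, ((r - a i : ℝ) : EReal) = (r : EReal) - ⨆ i, (a i : EReal) := by
  apply le_antisymm
  · have h1 : ∀ i, (a i : EReal) ≤ (r:EReal) - ⨅ j, ((r - a j : ℝ) : EReal) := by
      intro i
      have h0 : (⨅ j, ((r - a j : ℝ) : EReal)) ≤ ((r - a i : ℝ) : EReal) := iInf_le _ i
      have h2 := esub_anti r h0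
      rwa [EReal.coe_sub, esub_invol] at h2
    have h4 := esub_anti r (iSup_le h1)
    rwa [esub_invol] at h4
  · apply le_iInf
    intro i
    have h0 : (a i : EReal) ≤ ⨆ j, (a j : EReal) := le_iSup (fun j => ((a j : EReal))) i
    have h2 := esub_anti r h0
    rwa [← EReal.coe_sub] at h2

-- the linear constraint transfer
private lemma linIff (k s : ℝ) (C : ℝ≥0∞) :
    ((k + s : ℝ) : EReal) ≤ (1 : EReal) + (C : EReal) ↔
      ((s : ℝ) : EReal) ≤ ((1 - k : ℝ) : EReal) + (C : EReal) := by
  induction C using ENNReal.recTopCoe with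
  | top =>
    simp only [EReal.coe_ennreal_top]
    rw [EReal.add_top_of_ne_bot (show (1:EReal) ≠ ⊥ from EReal.coe_ne_bot 1),
      EReal.add_top_of_ne_bot (EReal.coe_ne_bot _)]
    simp
  | coe x =>
    rw [EReal.coe_nnreal_eq_coe_real, show (1:EReal) = ((1:ℝ):EReal) from rfl,
      ← EReal.coe_add, ← EReal.coe_add, EReal.coe_le_coe_iff, EReal.coe_le_coe_iff]
    constructor <;> intro <;> linarith


/-- Appendix E: for the 0-1 loss, the dual constraint is equivalent to the
linear constraints `∑_{i∈A} φ_i(x_i) ≤ 1 − |A| + c_A(x_A)`; consequently the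
dual problem (1.12) is equivalent, via `g_i = 1 + φ_i`, to problem (1.7), with
value `1` minus the value of the latter. -/
theorem statement18
    {X Y : Type*} [MetricSpace X] [TopologicalSpace.SeparableSpace X] [CompleteSpace X]
    [MeasurableSpace X] [BorelSpace X] [Nonempty X]
    [Fintype Y] [Nonempty Y]
    (c : X → X → ℝ≥0∞)
    (μ : Y → Measure X) (hμfin : ∀ i, IsFiniteMeasure (μ i))
    (hμ1 : ∑ i, μ i Set.univ = 1) :
    (∀ φ : Y → X → ℝ,
      dualConstraint c loss01 μ φ ↔
        ∀ (A : Finset Y) (x : Y → X), (∀ i ∈ A, x i ∈ msupport (μ i)) →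
          ((∑ i ∈ A, φ i (x i) : ℝ) : EReal)
            ≤ ((1 - (A.card : ℝ) : ℝ) : EReal) + (costAinf c A x : EReal)) ∧
    (dualValueCb c loss01 μ
      = (1 : EReal) -
        ⨆ (g : Y → BoundedContinuousFunction X ℝ)
          (_ : ∀ (A : Finset Y) (x : Y → X), (∀ i ∈ A, x i ∈ msupport (μ i)) →
            ((∑ i ∈ A, g i (x i) : ℝ) : EReal)
              ≤ (1 : EReal) + (costAinf c A x : EReal)),
          (((∑ i, ∫ x, g i x ∂(μ i)) : ℝ) : EReal)) ∧
    (∀ φ : Y → BoundedContinuousFunction X ℝ,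
      (dualConstraint c loss01 μ (fun i => (φ i : X → ℝ)) ∧
        (((- ∑ i, ∫ x, φ i x ∂(μ i)) : ℝ) : EReal) = dualValueCb c loss01 μ)
      ↔
      ((∀ (A : Finset Y) (x : Y → X), (∀ i ∈ A, x i ∈ msupport (μ i)) →
          ((∑ i ∈ A, (1 + φ i) (x i) : ℝ) : EReal)
            ≤ (1 : EReal) + (costAinf c A x : EReal)) ∧
        (((∑ i, ∫ x, (1 + φ i) x ∂(μ i)) : ℝ) : EReal)
          = ⨆ (g : Y → BoundedContinuousFunction X ℝ)
              (_ : ∀ (A : Finset Y) (x : Y → X), (∀ i ∈ A, x i ∈ msupport (μ i)) →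
                ((∑ i ∈ A, g i (x i) : ℝ) : EReal)
                  ≤ (1 : EReal) + (costAinf c A x : EReal)),
              (((∑ i, ∫ x, g i x ∂(μ i)) : ℝ) : EReal))) := by
  classical
  -- abbreviations
  set P : (Y → BoundedContinuousFunction X ℝ) → Prop := fun g =>
    ∀ (A : Finset Y) (x : Y → X), (∀ i ∈ A, x i ∈ msupport (μ i)) →
      ((∑ i ∈ A, g i (x i) : ℝ) : EReal)
        ≤ (1 : EReal) + (costAinf c A x : EReal) with hP_def
  -- feasibility transfer: for any tuple of functions φ (as plain functions)
  have hfeas : ∀ φ : Y → BoundedContinuousFunction X ℝ,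
      dualConstraint c loss01 μ (fun i => (φ i : X → ℝ)) ↔ P (fun i => 1 + φ i) := by
    intro φ
    rw [part1]
    constructor
    · intro h A x hx
      have h2 := h A x hx
      have hsum : ∑ i ∈ A, (1 + φ i) (x i) = (A.card : ℝ) + ∑ i ∈ A, φ i (x i) := by
        simp [BoundedContinuousFunction.coe_add, Finset.sum_add_distrib]
      rw [hsum, linIff]
      exact h2
    · intro h A x hx
      have h2 := h A x hx
      have hsum : ∑ i ∈ A, (1 + φ i) (x i) = (A.card : ℝ) + ∑ i ∈ A, φ i (x i) := by
        simp [BoundedContinuousFunction.coe_add, Finset.sum_add_distrib]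
      rw [hsum, linIff] at h2
      exact h2
  -- mass identity
  have hmass : ∑ i, ((μ i) Set.univ).toReal = 1 := by
    rw [← ENNReal.toReal_sum (fun i _ => measure_ne_top (μ i) _), hμ1, ENNReal.toReal_one]
  -- integral identity
  have hInt : ∀ (i : Y) (ψ : BoundedContinuousFunction X ℝ),
      ∫ x, (1 + ψ) x ∂(μ i) = ((μ i) Set.univ).toReal + ∫ x, ψ x ∂(μ i) := by
    intro i ψ
    haveI := hμfin i
    calc ∫ x, (1 + ψ) x ∂(μ i) = ∫ x, (1 + ψ x) ∂(μ i) := rfl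
      _ = (∫ _x, (1:ℝ) ∂(μ i)) + ∫ x, ψ x ∂(μ i) :=
          integral_add (integrable_const 1) (ψ.integrable (μ i))
      _ = ((μ i) Set.univ).toReal + ∫ x, ψ x ∂(μ i) := by
          rw [integral_const, smul_eq_mul, mul_one]
          rfl
  have hIntSum : ∀ φ : Y → BoundedContinuousFunction X ℝ,
      ∑ i, ∫ x, (1 + φ i) x ∂(μ i) = 1 + ∑ i, ∫ x, φ i x ∂(μ i) := by
    intro φ
    rw [Finset.sum_congr rfl (fun i _ => hInt i (φ i)), Finset.sum_add_distrib, hmass]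
  -- part 2
  set S : EReal := ⨆ (g : Y → BoundedContinuousFunction X ℝ) (_ : P g),
    (((∑ i, ∫ x, g i x ∂(μ i)) : ℝ) : EReal) with hS_def
  have hpart2 : dualValueCb c loss01 μ = (1 : EReal) - S := by
    have hrw : dualValueCb c loss01 μ
        = ⨅ (g : Y → BoundedContinuousFunction X ℝ) (_ : P g),
            ((1 - ∑ i, ∫ x, g i x ∂(μ i) : ℝ) : EReal) := by
      apply le_antisymm
      · apply le_iInf₂
        intro g hg
        have hfg : (fun i => 1 + (g i - 1)) = g := by
          funext i; ring
        have hcon : dualConstraint c loss01 μ (fun i => ((g i - 1 : BoundedContinuousFunction X ℝ) : X → ℝ)) := by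
          rw [hfeas]; rw [hfg]; exact hg
        refine le_trans (iInf₂_le (fun i => g i - 1) hcon) (le_of_eq ?_)
        congr 1
        have : ∀ i, ∫ x, (g i - 1) x ∂(μ i) = ∫ x, g i x ∂(μ i) - ((μ i) Set.univ).toReal := by
          intro i
          have h1 : g i = 1 + (g i - 1) := by ring
          have := hInt i (g i - 1)
          rw [← h1] at this
          linarith
        rw [Finset.sum_congr rfl (fun i _ => this i), Finset.sum_sub_distrib, hmass]
        ring
      · apply le_iInf₂
        intro φ hφ
        refine le_trans (iInf₂_le (fun i => 1 + φ i) ((hfeas φ).mp hφ)) (le_of_eq ?_)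
        congr 1
        rw [hIntSum φ]
        ring
    rw [hrw, iInf_subtype', iInf_congr (fun g => rfl), iInf_const_sub 1
      (fun g : {g : Y → BoundedContinuousFunction X ℝ // P g} =>
        ∑ i, ∫ x, g.1 i x ∂(μ i)), hS_def, iSup_subtype']
    rfl
  refine ⟨fun φ => part1 c μ φ, hpart2, ?_⟩
  -- part 3
  intro φ
  have hS0 : (0 : EReal) ≤ S := by
    have h0 : P (fun _ => 0) := by
      intro A x hx
      simp only [BoundedContinuousFunction.coe_zero, Pi.zero_apply, Finset.sum_const_zero]
      have hC : (0 : EReal) ≤ (costAinf c A x : EReal) := by exact EReal.coe_ennreal_nonneg _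
      calc ((0:ℝ) : EReal) = (0 : EReal) := rfl
        _ ≤ (1 : EReal) + (costAinf c A x : EReal) := by
            calc (0 : EReal) ≤ (1 : EReal) := by norm_num
              _ = (1 : EReal) + 0 := (add_zero _).symm
              _ ≤ _ := add_le_add le_rfl hC
    refine le_trans ?_ (le_iSup₂ (f := fun g (_ : P g) =>
      (((∑ i, ∫ x, g i x ∂(μ i)) : ℝ) : EReal)) (fun _ => 0) h0)
    simp
  constructor
  · rintro ⟨hcon, hval⟩
    refine ⟨(hfeas φ).mp hcon, ?_⟩
    rw [hpart2] at hval
    rw [hIntSum φ]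
    rcases eq_or_ne S ⊤ with hT | hT
    · rw [hT, EReal.sub_top] at hval
      exact absurd hval (EReal.coe_ne_bot _)
    · have hB : S ≠ ⊥ := ne_bot_of_le_ne_bot (by simp) hS0
      rw [← EReal.coe_toReal hT hB] at hval ⊢
      rw [← EReal.coe_one, ← EReal.coe_sub, EReal.coe_eq_coe_iff] at hval
      rw [EReal.coe_eq_coe_iff]
      linarith
  · rintro ⟨hg, hval⟩
    refine ⟨(hfeas φ).mpr hg, ?_⟩
    rw [hpart2]
    rw [hIntSum φ] at hval
    rcases eq_or_ne S ⊤ with hT | hT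
    · rw [hT] at hval
      exact absurd hval (EReal.coe_ne_top _)
    · have hB : S ≠ ⊥ := ne_bot_of_le_ne_bot (by simp) hS0
      rw [← EReal.coe_toReal hT hB] at hval ⊢
      rw [EReal.coe_eq_coe_iff] at hval
      rw [← EReal.coe_one, ← EReal.coe_sub, EReal.coe_eq_coe_iff]
      linarith


end AdvRobust
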